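/- (Proposition 7) Fix c ∈ ℝ, s ≥ 0 and ε ∈ (0,1), and let ε* ∈ ℝ be the unique real with Φ(ε*) = ε. Then the expected number of common features at sample i in the covariate-dependent MVP-IBP model, E(c_i^{(ε)}) = p · Φ((μ_p + c − ε*)/√(2 log p + s)), satisfies lim_{p→∞} p · Φ((μ_p + c − ε*)/√(2 log p + s)) = α · exp(−ε* + c + (s − 1)/2), where c = x_i^T γ and s = x_i^T Ψ x_i. -/

import Mathlib

open MeasureTheory Real Filter

/-- The standard normal density `φ(x) = (2π)^{-1/2} exp(-x²/2)`. -/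
noncomputable def stdNormalPDF (x : ℝ) : ℝ :=
  (Real.sqrt (2 * Real.pi))⁻¹ * Real.exp (-x ^ 2 / 2)

/-- The standard normal CDF `Φ(x) = ∫_{-∞}^x φ(t) dt`. -/
noncomputable def stdNormalCDF (x : ℝ) : ℝ :=
  ∫ t in Set.Iio x, stdNormalPDF t

/-- `τ_p = √(2 log p)`. -/
noncomputable def tauP (p : ℕ) : ℝ := Real.sqrt (2 * Real.log p)

/-- The density of `N(μ_p, τ_p²)` at `x`, namely `τ_p⁻¹ φ((x - μ_p)/τ_p)`. -/
noncomputable def mvpDens (μ : ℕ → ℝ) (p : ℕ) (x : ℝ) : ℝ :=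
  (tauP p)⁻¹ * stdNormalPDF ((x - μ p) / tauP p)

lemma pdf_pos (x : ℝ) : 0 < stdNormalPDF x := by
  unfold stdNormalPDF
  positivity

lemma pdf_cont : Continuous stdNormalPDF := by
  unfold stdNormalPDF
  continuity

lemma pdf_integrable : Integrable stdNormalPDF := by
  unfold stdNormalPDF
  apply Integrable.const_mul
  have : ∀ x : ℝ, Real.exp (-x ^ 2 / 2) = Real.exp (-(1/2) * x ^ 2) := by
    intro x; ring_nf
  simp only [this]
  exact integrable_exp_neg_mul_sq (by norm_num)

lemma cdf_eq_Iic (x : ℝ) : stdNormalCDF x = ∫ t in Set.Iic x, stdNormalPDF t :=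
  (MeasureTheory.integral_Iic_eq_integral_Iio).symm

lemma cdf_sub (a b : ℝ) : stdNormalCDF b - stdNormalCDF a = ∫ t in a..b, stdNormalPDF t := by
  rw [cdf_eq_Iic, cdf_eq_Iic]
  exact intervalIntegral.integral_Iic_sub_Iic pdf_integrable.integrableOn pdf_integrable.integrableOn

lemma cdf_hasDerivAt (x : ℝ) : HasDerivAt stdNormalCDF (stdNormalPDF x) x := by
  have h := (pdf_cont.integral_hasStrictDerivAt 0 x).hasDerivAt
  have : stdNormalCDF = fun y => stdNormalCDF 0 + ∫ t in (0:ℝ)..y, stdNormalPDF t := by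
    funext y; rw [← cdf_sub]; ring
  rw [this]
  simpa using h.const_add (stdNormalCDF 0)

lemma cdf_pos (x : ℝ) : 0 < stdNormalCDF x := by
  rw [cdf_eq_Iic]
  apply setIntegral_pos_iff_support_of_nonneg_ae ?_ ?_ |>.mpr
  · have : (Function.support stdNormalPDF) = Set.univ := by
      ext t; simp [Function.support, (pdf_pos t).ne']
    rw [this]
    simp [Real.volume_Iic]
  · exact Filter.Eventually.of_forall fun t => (pdf_pos t).le
  · exact pdf_integrable.integrableOn

lemma cdf_tendsto_zero : Tendsto stdNormalCDF atBot (nhds 0) := by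
  have h := intervalIntegral_tendsto_integral_Iic (μ := volume) (f := stdNormalPDF)
      (a := fun x : ℝ => x) (l := atBot) 0 pdf_integrable.integrableOn tendsto_id
  have heq : ∀ x : ℝ, stdNormalCDF x = stdNormalCDF 0 - ∫ t in x..(0:ℝ), stdNormalPDF t := by
    intro x; rw [← cdf_sub]; ring
  have key : Tendsto (fun x : ℝ => stdNormalCDF 0 - ∫ t in x..(0:ℝ), stdNormalPDF t) atBot
      (nhds (stdNormalCDF 0 - ∫ t in Set.Iic (0:ℝ), stdNormalPDF t)) :=
    tendsto_const_nhds.sub h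
  rw [← cdf_eq_Iic, sub_self] at key
  exact key.congr fun x => (heq x).symm

lemma cdf_mono : Monotone stdNormalCDF := by
  intro a b hab
  have := cdf_sub a b
  have hnn : 0 ≤ ∫ t in a..b, stdNormalPDF t :=
    intervalIntegral.integral_nonneg hab fun t _ => (pdf_pos t).le
  linarith

lemma pdf_hasDerivAt (x : ℝ) : HasDerivAt stdNormalPDF (-x * stdNormalPDF x) x := by
  have h1 : HasDerivAt (fun y : ℝ => -y ^ 2 / 2) (-x) x := by
    have := ((hasDerivAt_pow 2 x).neg).div_const 2
    refine this.congr_deriv ?_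
    push_cast; ring
  have h2 := (h1.exp).const_mul (Real.sqrt (2 * Real.pi))⁻¹
  unfold stdNormalPDF
  refine h2.congr_deriv ?_
  ring

lemma pdf_tendsto_zero : Tendsto stdNormalPDF atBot (nhds 0) := by
  unfold stdNormalPDF
  rw [show (0:ℝ) = (Real.sqrt (2 * Real.pi))⁻¹ * 0 by ring]
  apply Tendsto.const_mul
  apply Real.tendsto_exp_atBot.comp
  have key : Tendsto (fun x : ℝ => -x ^ 2 / 2) atBot atBot := by
    apply tendsto_atBot_mono' atBot ?_ tendsto_id
    filter_upwards [eventually_le_atBot (-2:ℝ)] with x hx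
    simp only [id]
    nlinarith
  exact key

lemma sq_tendsto_atTop : Tendsto (fun x : ℝ => x ^ 2) atBot atTop := by
  have := (tendsto_pow_atTop (α := ℝ) (n := 2) two_ne_zero).comp tendsto_neg_atBot_atTop
  exact this.congr fun x => by simp [neg_pow]

lemma g_hasDerivAt (x : ℝ) :
    HasDerivAt (fun x => stdNormalCDF x + x * stdNormalPDF x / (1 + x ^ 2))
      (2 * stdNormalPDF x / (1 + x ^ 2) ^ 2) x := by
  have hx2 : (1 : ℝ) + x ^ 2 ≠ 0 := by positivity
  have hN : HasDerivAt (fun x : ℝ => x * stdNormalPDF x)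
      (1 * stdNormalPDF x + x * (-x * stdNormalPDF x)) x :=
    (hasDerivAt_id x).mul (pdf_hasDerivAt x)
  have hD : HasDerivAt (fun x : ℝ => 1 + x ^ 2) (0 + 2 * x ^ 1) x :=
    (hasDerivAt_const x 1).add (hasDerivAt_pow 2 x)
  have hQ := hN.div hD hx2
  have := (cdf_hasDerivAt x).add hQ
  refine this.congr_deriv ?_
  field_simp
  ring

lemma g_tendsto_zero :
    Tendsto (fun x => stdNormalCDF x + x * stdNormalPDF x / (1 + x ^ 2)) atBot (nhds 0) := by
  rw [show (0:ℝ) = 0 + 0 by ring]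
  apply cdf_tendsto_zero.add
  refine squeeze_zero_norm ?_ pdf_tendsto_zero
  intro x
  have h1 : |x| ≤ 1 + x ^ 2 := by nlinarith [abs_nonneg x, sq_abs x]
  have h2 : (0:ℝ) < 1 + x ^ 2 := by positivity
  rw [Real.norm_eq_abs, abs_div, abs_mul, abs_of_pos (pdf_pos x), abs_of_pos h2]
  rw [div_le_iff₀ h2]
  nlinarith [pdf_pos x, abs_nonneg x]

lemma mills_le_cdf (x : ℝ) : -x * stdNormalPDF x / (1 + x ^ 2) ≤ stdNormalCDF x := by
  have hmono : StrictMono (fun x => stdNormalCDF x + x * stdNormalPDF x / (1 + x ^ 2)) := by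
    apply strictMono_of_deriv_pos
    intro y
    rw [(g_hasDerivAt y).deriv]
    have := pdf_pos y
    positivity
  have h0 : 0 ≤ stdNormalCDF x + x * stdNormalPDF x / (1 + x ^ 2) := by
    apply le_of_tendsto g_tendsto_zero
    filter_upwards [eventually_le_atBot x] with y hy
    exact hmono.monotone hy
  have e : -x * stdNormalPDF x / (1 + x ^ 2) = -(x * stdNormalPDF x / (1 + x ^ 2)) := by ring
  rw [e]; linarith

lemma h_hasDerivAt {x : ℝ} (hx : x ≠ 0) :
    HasDerivAt (fun x => -stdNormalPDF x / x - stdNormalCDF x)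
      (stdNormalPDF x / x ^ 2) x := by
  have hN : HasDerivAt (fun x : ℝ => -stdNormalPDF x) (-(-x * stdNormalPDF x)) x :=
    (pdf_hasDerivAt x).neg
  have hQ := hN.div (hasDerivAt_id x) hx
  have := hQ.sub (cdf_hasDerivAt x)
  refine this.congr_deriv ?_
  simp only [id]
  field_simp
  ring

lemma h_tendsto_zero :
    Tendsto (fun x => -stdNormalPDF x / x - stdNormalCDF x) atBot (nhds 0) := by
  rw [show (0:ℝ) = 0 - 0 by ring]
  apply Tendsto.sub ?_ cdf_tendsto_zero
  apply squeeze_zero_norm' ?_ pdf_tendsto_zero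
  filter_upwards [eventually_le_atBot (-1 : ℝ)] with x hx
  have hxpos : (1:ℝ) ≤ -x := by linarith
  have h0 : x ≠ 0 := by linarith
  rw [Real.norm_eq_abs, abs_div, abs_neg, abs_of_pos (pdf_pos x)]
  rw [div_le_iff₀ (by rw [abs_pos]; exact h0)]
  nlinarith [pdf_pos x, abs_of_neg (show x < 0 by linarith)]

lemma cdf_le_mills {x : ℝ} (hx : x < 0) : stdNormalCDF x ≤ stdNormalPDF x / (-x) := by
  have hmono : StrictMonoOn (fun x => -stdNormalPDF x / x - stdNormalCDF x) (Set.Iio 0) := by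
    apply strictMonoOn_of_deriv_pos (convex_Iio 0)
    · intro y hy
      exact ((h_hasDerivAt (ne_of_lt hy)).sub (hasDerivAt_const y 0)).differentiableAt.continuousAt.continuousWithinAt |>.congr (fun z _ => by simp) (by simp)
    · intro y hy
      rw [interior_Iio] at hy
      rw [((h_hasDerivAt (ne_of_lt hy))).deriv]
      have hy' : y < 0 := hy
      have hy2 : (0:ℝ) < y ^ 2 := by nlinarith
      exact div_pos (pdf_pos y) hy2
  have h0 : 0 ≤ -stdNormalPDF x / x - stdNormalCDF x := by
    apply le_of_tendsto h_tendsto_zero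
    filter_upwards [eventually_lt_atBot x] with y hy
    exact (hmono.monotoneOn) (Set.mem_Iio.mpr (lt_trans hy hx)) (Set.mem_Iio.mpr hx) hy.le
  have e : stdNormalPDF x / (-x) = -stdNormalPDF x / x := by
    rw [div_neg, neg_div]
  rw [e]; linarith

lemma inv_sq_tendsto : Tendsto (fun x : ℝ => (x ^ 2)⁻¹) atBot (nhds 0) :=
  tendsto_inv_atTop_zero.comp sq_tendsto_atTop

lemma mills_tendsto :
    Tendsto (fun x => stdNormalCDF x * (-x) / stdNormalPDF x) atBot (nhds 1) := by
  have hlow : Tendsto (fun x : ℝ => x ^ 2 / (1 + x ^ 2)) atBot (nhds 1) := by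
    have h1 : Tendsto (fun x : ℝ => 1 + x ^ 2) atBot atTop :=
      tendsto_atTop_add_const_left atBot 1 sq_tendsto_atTop
    have h2 : Tendsto (fun x : ℝ => 1 - (1 + x ^ 2)⁻¹) atBot (nhds (1 - 0)) :=
      tendsto_const_nhds.sub (tendsto_inv_atTop_zero.comp h1)
    rw [sub_zero] at h2
    apply h2.congr
    intro x
    have : (1:ℝ) + x ^ 2 ≠ 0 := by positivity
    field_simp
    ring
  refine tendsto_of_tendsto_of_tendsto_of_le_of_le' hlow tendsto_const_nhds ?_ ?_
  · filter_upwards [eventually_lt_atBot (0:ℝ)] with x hx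
    have h1 := mills_le_cdf x
    have hφ := pdf_pos x
    have hx2 : (0:ℝ) < 1 + x ^ 2 := by positivity
    rw [div_le_div_iff₀ hx2 hφ]
    have h2 : -x * stdNormalPDF x ≤ stdNormalCDF x * (1 + x ^ 2) := by
      rw [div_le_iff₀ hx2] at h1; linarith
    nlinarith [cdf_pos x]
  · filter_upwards [eventually_lt_atBot (0:ℝ)] with x hx
    have h1 := cdf_le_mills hx
    have hφ := pdf_pos x
    rw [div_le_one hφ]
    rw [div_eq_mul_inv] at h1
    have hx' : (0:ℝ) < -x := by linarith
    calc stdNormalCDF x * (-x) ≤ (stdNormalPDF x * (-x)⁻¹) * (-x) := by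
          apply mul_le_mul_of_nonneg_right h1 hx'.le
      _ = stdNormalPDF x := by
          rw [mul_assoc, inv_mul_cancel₀ hx'.ne', mul_one]

lemma log_neg_div_sq : Tendsto (fun x : ℝ => Real.log (-x) / x ^ 2) atBot (nhds 0) := by
  have h0 : Tendsto (fun t : ℝ => Real.log t / t) atTop (nhds 0) :=
    (Real.tendsto_pow_log_div_mul_add_atTop 1 0 1 one_ne_zero).congr fun t => by simp
  have h1 : Tendsto (fun t : ℝ => (Real.log t / t) * t⁻¹) atTop (nhds 0) := by
    rw [show (0:ℝ) = 0 * 0 by ring]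
    exact h0.mul tendsto_inv_atTop_zero
  have h2 := h1.comp tendsto_neg_atBot_atTop
  apply h2.congr
  intro x
  simp only [Function.comp]
  rw [div_eq_mul_inv, mul_assoc, ← mul_inv, show (-x)*(-x) = x^2 by ring, ← div_eq_mul_inv]

lemma log_pdf (x : ℝ) :
    Real.log (stdNormalPDF x) = -Real.log (Real.sqrt (2 * Real.pi)) - x ^ 2 / 2 := by
  unfold stdNormalPDF
  rw [Real.log_mul (by positivity) (Real.exp_ne_zero _), Real.log_inv, Real.log_exp]
  ring

lemma log_one_add_sq_div_sq :
    Tendsto (fun x : ℝ => Real.log (1 + x ^ 2) / x ^ 2) atBot (nhds 0) := by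
  have hub : Tendsto (fun x : ℝ => Real.log 2 / x ^ 2 + 2 * (Real.log (-x) / x ^ 2)) atBot
      (nhds 0) := by
    rw [show (0:ℝ) = Real.log 2 * 0 + 2 * 0 by ring]
    exact ((inv_sq_tendsto.const_mul (Real.log 2)).congr fun x => by
      rw [div_eq_mul_inv, mul_comm]).add (log_neg_div_sq.const_mul 2)
  refine tendsto_of_tendsto_of_tendsto_of_le_of_le' tendsto_const_nhds hub ?_ ?_
  · filter_upwards [eventually_le_atBot (-1:ℝ)] with x hx
    have h1 : (1:ℝ) ≤ 1 + x ^ 2 := by nlinarith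
    have h2 : 0 ≤ Real.log (1 + x ^ 2) := Real.log_nonneg h1
    positivity
  · filter_upwards [eventually_le_atBot (-1:ℝ)] with x hx
    have hx2 : (0:ℝ) < x ^ 2 := by nlinarith
    have h1 : (1:ℝ) + x ^ 2 ≤ 2 * (-x) * (-x) := by nlinarith
    have hnx : (0:ℝ) < -x := by linarith
    have h2 : Real.log (1 + x ^ 2) ≤ Real.log (2 * (-x) * (-x)) :=
      Real.log_le_log (by positivity) h1
    have h3 : Real.log (2 * (-x) * (-x)) = Real.log 2 + Real.log (-x) + Real.log (-x) := by
      rw [Real.log_mul (by positivity) hnx.ne', Real.log_mul (by norm_num) hnx.ne']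
    have e : Real.log 2 / x ^ 2 + 2 * (Real.log (-x) / x ^ 2)
        = (Real.log 2 + Real.log (-x) + Real.log (-x)) / x ^ 2 := by
      field_simp; ring
    rw [e, ← h3]
    gcongr

lemma log_cdf_asymp :
    Tendsto (fun x : ℝ => Real.log (stdNormalCDF x) / x ^ 2) atBot (nhds (-(1/2))) := by
  have C := Real.log (Real.sqrt (2 * Real.pi))
  -- lower bound function
  have hlo : Tendsto (fun x : ℝ => Real.log (-x) / x ^ 2 +
      (-Real.log (Real.sqrt (2 * Real.pi)) * (x ^ 2)⁻¹ - 1/2) - Real.log (1 + x ^ 2) / x ^ 2)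
      atBot (nhds (-(1/2))) := by
    rw [show (-(1/2):ℝ) = 0 + (-Real.log (Real.sqrt (2 * Real.pi)) * 0 - 1/2) - 0 by ring]
    exact (log_neg_div_sq.add ((inv_sq_tendsto.const_mul _).sub tendsto_const_nhds)).sub
      log_one_add_sq_div_sq
  have hhi : Tendsto (fun x : ℝ =>
      (-Real.log (Real.sqrt (2 * Real.pi)) * (x ^ 2)⁻¹ - 1/2) - Real.log (-x) / x ^ 2)
      atBot (nhds (-(1/2))) := by
    rw [show (-(1/2):ℝ) = (-Real.log (Real.sqrt (2 * Real.pi)) * 0 - 1/2) - 0 by ring]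
    exact ((inv_sq_tendsto.const_mul _).sub tendsto_const_nhds).sub log_neg_div_sq
  refine tendsto_of_tendsto_of_tendsto_of_le_of_le' hlo hhi ?_ ?_
  · filter_upwards [eventually_le_atBot (-1:ℝ)] with x hx
    have hx0 : x < 0 := by linarith
    have hx2 : (0:ℝ) < x ^ 2 := by nlinarith
    have h1 := mills_le_cdf x
    have hlog : Real.log (-x * stdNormalPDF x / (1 + x ^ 2)) ≤ Real.log (stdNormalCDF x) :=
      Real.log_le_log (by
        have hp := pdf_pos x
        have hnx : (0:ℝ) < -x := by linarith
        exact div_pos (mul_pos hnx hp) (by positivity)) h1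
    have heq : Real.log (-x * stdNormalPDF x / (1 + x ^ 2)) =
        Real.log (-x) + (-Real.log (Real.sqrt (2 * Real.pi)) - x ^ 2 / 2)
          - Real.log (1 + x ^ 2) := by
      rw [Real.log_div (by
          have hp := pdf_pos x
          have hnx : (0:ℝ) < -x := by linarith
          exact ne_of_gt (mul_pos hnx hp)) (by positivity),
        Real.log_mul (ne_of_gt (by linarith : (0:ℝ) < -x)) (ne_of_gt (pdf_pos x)), log_pdf]
    rw [heq] at hlog
    have key : (Real.log (-x) + (-Real.log (Real.sqrt (2 * Real.pi)) - x ^ 2 / 2)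
        - Real.log (1 + x ^ 2)) / x ^ 2 ≤ Real.log (stdNormalCDF x) / x ^ 2 := by
      gcongr
    calc Real.log (-x) / x ^ 2 + (-Real.log (Real.sqrt (2 * Real.pi)) * (x ^ 2)⁻¹ - 1/2)
          - Real.log (1 + x ^ 2) / x ^ 2
        = (Real.log (-x) + (-Real.log (Real.sqrt (2 * Real.pi)) - x ^ 2 / 2)
            - Real.log (1 + x ^ 2)) / x ^ 2 := by
          have hx0' : x ≠ 0 := hx0.ne
          field_simp
      _ ≤ _ := key
  · filter_upwards [eventually_le_atBot (-1:ℝ)] with x hx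
    have hx0 : x < 0 := by linarith
    have hx2 : (0:ℝ) < x ^ 2 := by nlinarith
    have h1 := cdf_le_mills hx0
    have hlog : Real.log (stdNormalCDF x) ≤ Real.log (stdNormalPDF x / (-x)) :=
      Real.log_le_log (cdf_pos x) h1
    have heq : Real.log (stdNormalPDF x / (-x)) =
        (-Real.log (Real.sqrt (2 * Real.pi)) - x ^ 2 / 2) - Real.log (-x) := by
      rw [Real.log_div (ne_of_gt (pdf_pos x)) (by linarith), log_pdf]
    rw [heq] at hlog
    calc Real.log (stdNormalCDF x) / x ^ 2
        ≤ ((-Real.log (Real.sqrt (2 * Real.pi)) - x ^ 2 / 2) - Real.log (-x)) / x ^ 2 := by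
          gcongr
      _ = (-Real.log (Real.sqrt (2 * Real.pi)) * (x ^ 2)⁻¹ - 1/2) - Real.log (-x) / x ^ 2 := by
          have hx0' : x ≠ 0 := hx0.ne
          field_simp

lemma sqrt_tendsto_atTop : Tendsto Real.sqrt atTop atTop := by
  apply tendsto_atTop_atTop_of_monotone (fun a b h => Real.sqrt_le_sqrt h)
  intro M
  exact ⟨M ^ 2, by rw [Real.sqrt_sq_eq_abs]; exact le_abs_self M⟩

/-- Proposition 7: with `Φ(ε*) = ε ∈ (0,1)`, covariate effect mean `c = x_i^T γ` and
variance `s = x_i^T Ψ x_i ≥ 0`, the expected number of common features at sample `i` in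
the covariate-dependent MVP-IBP model satisfies
`lim_{p→∞} p Φ((μ_p + c - ε*)/√(2 log p + s)) = α exp(-ε* + c + (s-1)/2)`. -/
theorem mvpIBP_cov_common_features (α : ℝ) (hα : 0 < α) (μ : ℕ → ℝ)
    (hμ : ∀ p : ℕ, 2 ≤ p →
      stdNormalCDF (μ p / Real.sqrt (1 + tauP p ^ 2)) = α / (α + p))
    (c s : ℝ) (hs : 0 ≤ s)
    (ε εstar : ℝ) (hε : ε ∈ Set.Ioo (0 : ℝ) 1) (hεstar : stdNormalCDF εstar = ε) :
    Filter.Tendsto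
      (fun p : ℕ =>
        (p : ℝ) * stdNormalCDF ((μ p + c - εstar) / Real.sqrt (2 * Real.log p + s)))
      Filter.atTop (nhds (α * Real.exp (-εstar + c + (s - 1) / 2))) := by
  set d : ℝ := c - εstar with hd
  set L : ℕ → ℝ := fun p => Real.log p with hLdef
  set u : ℕ → ℝ := fun p => μ p / Real.sqrt (1 + 2 * L p) with hudef
  set y : ℕ → ℝ := fun p => (μ p + d) / Real.sqrt (2 * L p + s) with hydef
  have hL : Tendsto L atTop atTop :=
    Real.tendsto_log_atTop.comp tendsto_natCast_atTop_atTop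
  have h2L : Tendsto (fun p => 2 * L p) atTop atTop := hL.const_mul_atTop two_pos
  have hLpos : ∀ᶠ p : ℕ in atTop, 0 < L p := hL.eventually_gt_atTop 0
  -- Φ(u p) = α/(α+p) eventually
  have hΦu : ∀ᶠ p : ℕ in atTop, stdNormalCDF (u p) = α / (α + p) := by
    filter_upwards [eventually_ge_atTop 2] with p hp
    have h1 := hμ p hp
    have hlog0 : 0 ≤ Real.log p := Real.log_nonneg (by exact_mod_cast Nat.one_le_of_lt hp)
    rw [tauP, Real.sq_sqrt (by linarith)] at h1
    exact h1
  have hαppos : ∀ p : ℕ, (0:ℝ) < α + p := fun p => by positivity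
  have hαp0 : Tendsto (fun p : ℕ => α / (α + p)) atTop (nhds 0) := by
    have h1 : Tendsto (fun p : ℕ => α + p) atTop atTop :=
      tendsto_atTop_add_const_left _ α tendsto_natCast_atTop_atTop
    have := (tendsto_inv_atTop_zero.comp h1).const_mul α
    rw [mul_zero] at this
    exact this.congr fun p => by rw [Function.comp_apply, div_eq_mul_inv]
  -- u → -∞
  have hu_bot : Tendsto u atTop atBot := by
    rw [tendsto_atBot]
    intro M
    filter_upwards [hαp0.eventually_lt_const (cdf_pos M), hΦu] with p h1p h2p
    by_contra h
    push_neg at h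
    have := cdf_mono h.le
    rw [h2p] at this
    linarith
  have hA : Tendsto (fun p => Real.log (stdNormalCDF (u p)) / (u p) ^ 2) atTop
      (nhds (-(1/2))) := log_cdf_asymp.comp hu_bot
  -- log(α+p)/log p → 1
  have hLinv : Tendsto (fun p : ℕ => (L p)⁻¹) atTop (nhds 0) :=
    tendsto_inv_atTop_zero.comp hL
  have hlogratio : Tendsto (fun p : ℕ => Real.log (α + p) / L p) atTop (nhds 1) := by
    have hz1 : Tendsto (fun p : ℕ => 1 + α / p) atTop (nhds 1) := by
      have := tendsto_const_div_atTop_nhds_zero_nat α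
      have h2 := tendsto_const_nhds (x := (1:ℝ)) (f := atTop (α := ℕ)) |>.add this
      rw [add_zero] at h2
      exact h2
    have hz2 : Tendsto (fun p : ℕ => Real.log (1 + α / p)) atTop (nhds 0) := by
      have := (Real.continuousAt_log (by norm_num : (1:ℝ) ≠ 0)).tendsto.comp hz1
      rw [Real.log_one] at this
      exact this
    have hz3 : Tendsto (fun p : ℕ => 1 + Real.log (1 + α / p) * (L p)⁻¹) atTop (nhds 1) := by
      have := hz2.mul hLinv
      rw [mul_zero] at this
      have h4 := tendsto_const_nhds (x := (1:ℝ)) (f := atTop (α := ℕ)) |>.add this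
      rw [add_zero] at h4
      exact h4
    apply hz3.congr'
    filter_upwards [eventually_ge_atTop 2, hLpos] with p hp hLp
    have hp0 : (0:ℝ) < p := by exact_mod_cast lt_of_lt_of_le (by norm_num : 0 < 2) hp
    have hfrac : (0:ℝ) < 1 + α / p := by positivity
    have key : Real.log (α + p) = Real.log p + Real.log (1 + α / p) := by
      rw [← Real.log_mul (ne_of_gt hp0) (ne_of_gt hfrac)]
      congr 1
      field_simp
      ring
    rw [key]
    field_simp
    rfl
  -- log Φ(u p)/log p → -1
  have hB : Tendsto (fun p : ℕ => Real.log (stdNormalCDF (u p)) / L p) atTop (nhds (-1)) := by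
    have h1 : Tendsto (fun p : ℕ => Real.log α * (L p)⁻¹ - Real.log (α + p) / L p) atTop
        (nhds (-1)) := by
      have := (hLinv.const_mul (Real.log α)).sub hlogratio
      rw [mul_zero, zero_sub] at this
      exact this
    apply h1.congr'
    filter_upwards [hΦu] with p hp
    rw [hp, Real.log_div (ne_of_gt hα) (ne_of_gt (hαppos p))]
    ring
  -- u² / log p → 2
  have hu2L : Tendsto (fun p : ℕ => (u p) ^ 2 / L p) atTop (nhds 2) := by
    have h1 := hB.mul (hA.inv₀ (by norm_num))
    rw [show (-1 : ℝ) * (-(1/2))⁻¹ = 2 by norm_num] at h1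
    apply h1.congr'
    filter_upwards [hΦu, eventually_ge_atTop 2, hLpos, hu_bot.eventually_lt_atBot 0]
      with p hp hp2 hLp hup
    have hΦlt1 : stdNormalCDF (u p) < 1 := by
      rw [hp, div_lt_one (hαppos p)]
      have : (2:ℝ) ≤ (p:ℝ) := by exact_mod_cast hp2
      linarith
    have hlogne : Real.log (stdNormalCDF (u p)) ≠ 0 :=
      ne_of_lt (Real.log_neg (cdf_pos _) hΦlt1)
    have hu2 : (u p) ^ 2 ≠ 0 := pow_ne_zero 2 (ne_of_lt hup)
    field_simp
  -- u / √(2 log p) → -1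
  have hu2L2 : Tendsto (fun p : ℕ => (u p) ^ 2 / (2 * L p)) atTop (nhds 1) := by
    have := hu2L.div_const 2
    rw [show (2:ℝ)/2 = 1 by norm_num] at this
    exact this.congr fun p => by rw [div_div, mul_comm]
  have hq : Tendsto (fun p : ℕ => u p / Real.sqrt (2 * L p)) atTop (nhds (-1)) := by
    have h1 := hu2L2.sqrt
    rw [Real.sqrt_one] at h1
    have h2 := h1.neg
    apply h2.congr'
    filter_upwards [hLpos, hu_bot.eventually_lt_atBot 0] with p hLp hup
    rw [Real.sqrt_div (sq_nonneg _), Real.sqrt_sq_eq_abs, abs_of_neg hup]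
    ring
  -- √(1+2L)/√(2L) → 1
  have hS1 : Tendsto (fun p : ℕ => Real.sqrt (1 + 2 * L p) / Real.sqrt (2 * L p)) atTop
      (nhds 1) := by
    have h1 : Tendsto (fun p : ℕ => (2 * L p)⁻¹ + 1) atTop (nhds 1) := by
      have := (tendsto_inv_atTop_zero.comp h2L).add (tendsto_const_nhds (x := (1:ℝ)))
      rw [zero_add] at this
      exact this
    have h2 := h1.sqrt
    rw [Real.sqrt_one] at h2
    apply h2.congr'
    filter_upwards [hLpos] with p hLp
    rw [← Real.sqrt_div (by positivity) (2 * L p)]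
    congr 1
    field_simp
  -- μ / (2 log p) → -1
  have hSpos : ∀ᶠ p : ℕ in atTop, 0 < Real.sqrt (1 + 2 * L p) := by
    filter_upwards [hLpos] with p hLp
    positivity
  have hμuS : ∀ᶠ p : ℕ in atTop, μ p = u p * Real.sqrt (1 + 2 * L p) := by
    filter_upwards [hSpos] with p hSp
    rw [hudef]
    field_simp
  have hμ2L : Tendsto (fun p : ℕ => μ p / (2 * L p)) atTop (nhds (-1)) := by
    have h1 := hq.mul hS1
    rw [show (-1 : ℝ) * 1 = -1 by norm_num] at h1
    apply h1.congr'
    filter_upwards [hLpos, hμuS] with p hLp hμp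
    rw [hμp]
    rw [div_mul_div_comm, Real.mul_self_sqrt (by linarith)]
  -- W := 2 log p + s
  set W : ℕ → ℝ := fun p => 2 * L p + s with hWdef
  have hW : Tendsto W atTop atTop := tendsto_atTop_add_const_right _ s h2L
  have hWpos : ∀ᶠ p : ℕ in atTop, 0 < W p := hW.eventually_gt_atTop 0
  have hWinv : Tendsto (fun p => (W p)⁻¹) atTop (nhds 0) := tendsto_inv_atTop_zero.comp hW
  have hfrac : Tendsto (fun p : ℕ => 2 * L p / W p) atTop (nhds 1) := by
    have h1 := (hWinv.const_mul s)
    rw [mul_zero] at h1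
    have h2 := (tendsto_const_nhds (x := (1:ℝ))).sub h1
    rw [sub_zero] at h2
    apply h2.congr'
    filter_upwards [hWpos] with p hWp
    have : 2 * L p = W p - s := by rw [hWdef]; ring
    rw [this]
    field_simp
  have hu2W : Tendsto (fun p : ℕ => (u p) ^ 2 / W p) atTop (nhds 1) := by
    have h1 := hu2L2.mul hfrac
    rw [mul_one] at h1
    apply h1.congr'
    filter_upwards [hLpos] with p hLp
    have h2L0 : 2 * L p ≠ 0 := by positivity
    field_simp
  have hμW : Tendsto (fun p : ℕ => μ p / W p) atTop (nhds (-1)) := by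
    have h1 := hμ2L.mul hfrac
    rw [mul_one] at h1
    apply h1.congr'
    filter_upwards [hLpos] with p hLp
    have h2L0 : 2 * L p ≠ 0 := by positivity
    field_simp
  -- exponent limit
  have hE : Tendsto (fun p : ℕ => ((u p) ^ 2 - (y p) ^ 2) / 2) atTop
      (nhds ((s - 1) / 2 + d)) := by
    have h1 : Tendsto (fun p : ℕ =>
        ((u p) ^ 2 / W p * (s - 1) - 2 * d * (μ p / W p) - d ^ 2 * (W p)⁻¹) / 2) atTop
        (nhds ((1 * (s - 1) - 2 * d * (-1) - d ^ 2 * 0) / 2)) := by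
      exact (((hu2W.mul_const (s - 1)).sub (hμW.const_mul (2 * d))).sub
        (hWinv.const_mul (d ^ 2))).div_const 2
    rw [show (1 * (s - 1) - 2 * d * (-1) - d ^ 2 * 0) / 2 = (s - 1) / 2 + d by ring] at h1
    apply h1.congr'
    filter_upwards [hWpos, hLpos, hμuS] with p hWp hLp hμp
    have hy2 : (y p) ^ 2 = (μ p + d) ^ 2 / W p := by
      rw [hydef]
      rw [div_pow, Real.sq_sqrt hWp.le]
    have hu2eq : (u p) ^ 2 = (μ p) ^ 2 / (1 + 2 * L p) := by
      rw [hudef]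
      simp only
      rw [div_pow, Real.sq_sqrt (by linarith)]
    have hWrfl : W p = 2 * L p + s := rfl
    rw [hy2, hu2eq, hWrfl]
    have h1p : (1 : ℝ) + 2 * L p ≠ 0 := by positivity
    have hWne : (2 : ℝ) * L p + s ≠ 0 := by rw [← hWrfl]; exact ne_of_gt hWp
    field_simp
    ring
  -- y → -∞
  have hμdW : Tendsto (fun p : ℕ => (μ p + d) / W p) atTop (nhds (-1)) := by
    have h1 := hμW.add (hWinv.const_mul d)
    rw [mul_zero, add_zero] at h1
    apply h1.congr'
    filter_upwards [hWpos] with p hWp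
    field_simp
  have hy_bot : Tendsto y atTop atBot := by
    have h1 : Tendsto (fun p : ℕ => ((μ p + d) / W p) * Real.sqrt (W p)) atTop atBot :=
      Tendsto.neg_mul_atTop (by norm_num : (-1:ℝ) < 0) hμdW (sqrt_tendsto_atTop.comp hW)
    apply h1.congr'
    filter_upwards [hWpos] with p hWp
    rw [hydef]
    rw [div_mul_eq_mul_div, div_eq_div_iff (ne_of_gt hWp) (by positivity)]
    rw [mul_assoc, Real.mul_self_sqrt hWp.le]
  -- u/y → 1
  have hsqWL : Tendsto (fun p : ℕ => Real.sqrt (W p) / Real.sqrt (2 * L p)) atTop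
      (nhds 1) := by
    have h1 : Tendsto (fun p : ℕ => 1 + s * (2 * L p)⁻¹) atTop (nhds 1) := by
      have h2 := (tendsto_inv_atTop_zero.comp h2L).const_mul s
      rw [mul_zero] at h2
      have h3 := (tendsto_const_nhds (x := (1:ℝ))).add h2
      rw [add_zero] at h3
      exact h3
    have h2 := h1.sqrt
    rw [Real.sqrt_one] at h2
    apply h2.congr'
    filter_upwards [hLpos] with p hLp
    have : 1 + s * (2 * L p)⁻¹ = W p / (2 * L p) := by
      rw [hWdef]
      field_simp
    rw [this, Real.sqrt_div' _ (by positivity)]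
  have h2LμD : Tendsto (fun p : ℕ => 2 * L p / (μ p + d)) atTop (nhds (-1)) := by
    have h1 : Tendsto (fun p : ℕ => (μ p + d) / (2 * L p)) atTop (nhds (-1)) := by
      have h2 := hμ2L.add ((tendsto_inv_atTop_zero.comp h2L).const_mul d)
      rw [mul_zero, add_zero] at h2
      apply h2.congr'
      filter_upwards [hLpos] with p hLp
      simp only [Function.comp_apply]
      field_simp
    have h2 := h1.inv₀ (by norm_num)
    rw [show ((-1:ℝ))⁻¹ = -1 by norm_num] at h2
    apply h2.congr
    intro p
    exact inv_div _ _
  have huy : Tendsto (fun p : ℕ => u p / y p) atTop (nhds 1) := by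
    have h1 := (hq.mul hsqWL).mul h2LμD
    rw [show (-1:ℝ) * 1 * (-1) = 1 by ring] at h1
    apply h1.congr'
    filter_upwards [hLpos, hWpos, hy_bot.eventually_lt_atBot 0] with p hLp hWp hyneg
    have hWrfl : (2 : ℝ) * L p + s = W p := rfl
    have hsqW : (0:ℝ) < Real.sqrt (W p) := Real.sqrt_pos.mpr hWp
    have hμdne : μ p + d ≠ 0 := by
      have hyW : y p * Real.sqrt (W p) = μ p + d := by
        rw [hydef]
        simp only
        rw [hWrfl, div_mul_cancel₀ _ (ne_of_gt hsqW)]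
      have : μ p + d < 0 := by
        rw [← hyW]
        exact mul_neg_of_neg_of_pos hyneg hsqW
      exact ne_of_lt this
    have e1 : Real.sqrt (2 * L p) * Real.sqrt (2 * L p) = 2 * L p :=
      Real.mul_self_sqrt (by positivity)
    rw [hydef]
    simp only
    rw [hWrfl, div_div_eq_mul_div]
    rw [div_mul_div_comm, div_mul_div_comm, e1]
    rw [show u p * Real.sqrt (W p) * (2 * L p) = (2 * L p) * (u p * Real.sqrt (W p)) from
      mul_comm _ _]
    rw [mul_div_mul_left _ _ (by positivity : (2:ℝ) * L p ≠ 0)]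
  -- Mills ratio pieces
  have hRy : Tendsto (fun p => stdNormalCDF (y p) * (-(y p)) / stdNormalPDF (y p)) atTop
      (nhds 1) := mills_tendsto.comp hy_bot
  have hRu : Tendsto (fun p => stdNormalCDF (u p) * (-(u p)) / stdNormalPDF (u p)) atTop
      (nhds 1) := mills_tendsto.comp hu_bot
  have hexp : Tendsto (fun p => Real.exp (((u p) ^ 2 - (y p) ^ 2) / 2)) atTop
      (nhds (Real.exp ((s - 1) / 2 + d))) := (Real.continuous_exp.tendsto _).comp hE
  have hratio : Tendsto (fun p => stdNormalCDF (y p) / stdNormalCDF (u p)) atTop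
      (nhds (Real.exp ((s - 1) / 2 + d))) := by
    have h1 := ((hRy.div hRu one_ne_zero).mul huy).mul hexp
    rw [show (1:ℝ) / 1 * 1 * Real.exp ((s - 1) / 2 + d) = Real.exp ((s - 1) / 2 + d) by
      norm_num] at h1
    apply h1.congr'
    filter_upwards [hu_bot.eventually_lt_atBot 0, hy_bot.eventually_lt_atBot 0]
      with p hup hyp
    have hexp_eq : Real.exp (((u p) ^ 2 - (y p) ^ 2) / 2) =
        stdNormalPDF (y p) / stdNormalPDF (u p) := by
      unfold stdNormalPDF
      rw [mul_div_mul_left _ _ (inv_ne_zero (by positivity))]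
      rw [← Real.exp_sub]
      congr 1
      ring
    rw [hexp_eq]
    have hφy := pdf_pos (y p)
    have hφu := pdf_pos (u p)
    have hΦy := cdf_pos (y p)
    have hΦup := cdf_pos (u p)
    have hune : u p ≠ 0 := ne_of_lt hup
    have hyne : y p ≠ 0 := ne_of_lt hyp
    simp only [Pi.div_apply]
    field_simp
  -- p/(α+p) → 1
  have hppart : Tendsto (fun p : ℕ => (p : ℝ) / (α + p)) atTop (nhds 1) := by
    have h1 := (tendsto_const_nhds (x := (1:ℝ))).sub hαp0
    rw [sub_zero] at h1
    apply h1.congr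
    intro p
    have := hαppos p
    field_simp
    ring
  -- final assembly
  have hmain := (hppart.const_mul α).mul hratio
  rw [show α * 1 * Real.exp ((s - 1) / 2 + d) = α * Real.exp (-εstar + c + (s - 1) / 2) by
    rw [hd, show (s - 1) / 2 + (c - εstar) = -εstar + c + (s - 1) / 2 from by ring, mul_one]] at hmain
  apply hmain.congr'
  filter_upwards [hΦu] with p hp
  have hargeq : (μ p + c - εstar) / Real.sqrt (2 * Real.log p + s) = y p := by
    rw [hydef]
    simp only
    congr 1
    rw [hd]
    ring
  rw [hargeq, hp]
  have h1 := hαppos p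
  have hΦy := cdf_pos (y p)
  field_simp
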